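/- Let B be a commutative ring of characteristic 2 and m̄ an ideal of B. Write ²m̄ for the ideal generated by squares of elements of m̄. For r ≥ 0 set J₀ = m̄, I₀ = m̄, and for r ≥ 1 set I_r = (²m̄)^r · m̄ and J_r = (²m̄)^{r−1} · m̄². Define R_r to be the set of 2×2 matrices ((1+m₁, m₂),(m₃, 1+m₄)) with m₁, m₄ ∈ J_r, m₂, m₃ ∈ I_r and determinant 1 (i.e. m₁ + m₄ + m₁m₄ + m₂m₃ = 0). Then each R_r is a subgroup of SL₂(B). -/

import Mathlib

open Matrix

/-- Char 2: with `²m̄` the ideal generated by squares of elements of `m̄`,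
`I_r = (²m̄)^r · m̄`, `J_r = (²m̄)^{r-1} · m̄²` (and `I₀ = J₀ = m̄`), the set `R_r` of
determinant-one matrices `(1+m₁, m₂; m₃, 1+m₄)` with `m₁, m₄ ∈ J_r`, `m₂, m₃ ∈ I_r`
is a subgroup of `SL₂(B)`. -/
theorem stmt12 (B : Type*) [CommRing B] [CharP B 2] (mbar : Ideal B)
    (sq : Ideal B) (hsq : sq = Ideal.span ((fun x : B => x ^ 2) '' (mbar : Set B)))
    (I J : ℕ → Ideal B)
    (hI0 : I 0 = mbar) (hJ0 : J 0 = mbar)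
    (hI : ∀ r : ℕ, 1 ≤ r → I r = sq ^ r * mbar)
    (hJ : ∀ r : ℕ, 1 ≤ r → J r = sq ^ (r - 1) * mbar ^ 2) :
    ∀ r : ℕ, ∃ H : Subgroup (SpecialLinearGroup (Fin 2) B),
      (H : Set (SpecialLinearGroup (Fin 2) B)) =
        {g : SpecialLinearGroup (Fin 2) B |
          (g : Matrix (Fin 2) (Fin 2) B) 0 0 - 1 ∈ J r ∧
          (g : Matrix (Fin 2) (Fin 2) B) 1 1 - 1 ∈ J r ∧
          (g : Matrix (Fin 2) (Fin 2) B) 0 1 ∈ I r ∧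
          (g : Matrix (Fin 2) (Fin 2) B) 1 0 ∈ I r} := by
  have hsqle : sq ≤ mbar ^ 2 := by
    rw [hsq, Ideal.span_le]
    rintro _ ⟨x, hx, rfl⟩
    simpa [pow_two] using Ideal.mul_mem_mul hx hx
  intro r
  -- key ideal inclusions
  have key : I r * I r ≤ J r ∧ J r * J r ≤ J r ∧ J r * I r ≤ I r := by
    rcases Nat.eq_zero_or_pos r with h0 | h1
    · subst h0
      rw [hI0, hJ0]
      exact ⟨Ideal.mul_le_left, Ideal.mul_le_left, Ideal.mul_le_left⟩
    · obtain ⟨s, rfl⟩ : ∃ s, r = s + 1 := ⟨r - 1, (Nat.succ_pred_eq_of_pos h1).symm⟩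
      rw [hI _ h1, hJ _ h1]
      simp only [Nat.add_sub_cancel]
      refine ⟨?_, ?_, ?_⟩
      · calc sq ^ (s+1) * mbar * (sq ^ (s+1) * mbar)
            = sq ^ (s+1) * sq ^ (s+1) * mbar ^ 2 := by ring
          _ ≤ sq ^ s * mbar ^ 2 := by
              refine Ideal.mul_mono ?_ le_rfl
              calc sq ^ (s+1) * sq ^ (s+1) ≤ sq ^ (s+1) := Ideal.mul_le_right
                _ = sq ^ s * sq := pow_succ sq s
                _ ≤ sq ^ s := Ideal.mul_le_left
      · exact Ideal.mul_le_left
      · calc sq ^ s * mbar ^ 2 * (sq ^ (s+1) * mbar)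
            = (sq ^ s * mbar ^ 2) * (sq ^ (s+1) * mbar) := rfl
          _ ≤ sq ^ (s+1) * mbar := Ideal.mul_le_right
  obtain ⟨hIIJ, hJJJ, hJII⟩ := key
  have hIJI : I r * J r ≤ I r := by
    rw [mul_comm]; exact hJII
  refine ⟨{
    carrier := {g : SpecialLinearGroup (Fin 2) B |
      (g : Matrix (Fin 2) (Fin 2) B) 0 0 - 1 ∈ J r ∧
      (g : Matrix (Fin 2) (Fin 2) B) 1 1 - 1 ∈ J r ∧
      (g : Matrix (Fin 2) (Fin 2) B) 0 1 ∈ I r ∧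
      (g : Matrix (Fin 2) (Fin 2) B) 1 0 ∈ I r}
    one_mem' := by simp
    mul_mem' := by
      rintro g h ⟨ha, hd, hb, hc⟩ ⟨ha', hd', hb', hc'⟩
      have hmul : ∀ i j : Fin 2, ((g * h : SpecialLinearGroup (Fin 2) B) :
          Matrix (Fin 2) (Fin 2) B) i j =
          (g : Matrix (Fin 2) (Fin 2) B) i 0 * (h : Matrix (Fin 2) (Fin 2) B) 0 j +
          (g : Matrix (Fin 2) (Fin 2) B) i 1 * (h : Matrix (Fin 2) (Fin 2) B) 1 j := by
        intro i j
        rw [Matrix.SpecialLinearGroup.coe_mul, Matrix.mul_apply, Fin.sum_univ_two]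
      refine ⟨?_, ?_, ?_, ?_⟩
      · rw [hmul]
        have : (g : Matrix (Fin 2) (Fin 2) B) 0 0 * (h : Matrix (Fin 2) (Fin 2) B) 0 0 +
            (g : Matrix (Fin 2) (Fin 2) B) 0 1 * (h : Matrix (Fin 2) (Fin 2) B) 1 0 - 1 =
            ((g : Matrix (Fin 2) (Fin 2) B) 0 0 - 1) + ((h : Matrix (Fin 2) (Fin 2) B) 0 0 - 1)
            + ((g : Matrix (Fin 2) (Fin 2) B) 0 0 - 1) * ((h : Matrix (Fin 2) (Fin 2) B) 0 0 - 1)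
            + (g : Matrix (Fin 2) (Fin 2) B) 0 1 * (h : Matrix (Fin 2) (Fin 2) B) 1 0 := by ring
        rw [this]
        exact Ideal.add_mem _ (Ideal.add_mem _ (Ideal.add_mem _ ha ha')
          (hJJJ (Ideal.mul_mem_mul ha ha'))) (hIIJ (Ideal.mul_mem_mul hb hc'))
      · rw [hmul]
        have : (g : Matrix (Fin 2) (Fin 2) B) 1 0 * (h : Matrix (Fin 2) (Fin 2) B) 0 1 +
            (g : Matrix (Fin 2) (Fin 2) B) 1 1 * (h : Matrix (Fin 2) (Fin 2) B) 1 1 - 1 =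
            ((g : Matrix (Fin 2) (Fin 2) B) 1 1 - 1) + ((h : Matrix (Fin 2) (Fin 2) B) 1 1 - 1)
            + ((g : Matrix (Fin 2) (Fin 2) B) 1 1 - 1) * ((h : Matrix (Fin 2) (Fin 2) B) 1 1 - 1)
            + (g : Matrix (Fin 2) (Fin 2) B) 1 0 * (h : Matrix (Fin 2) (Fin 2) B) 0 1 := by ring
        rw [this]
        exact Ideal.add_mem _ (Ideal.add_mem _ (Ideal.add_mem _ hd hd')
          (hJJJ (Ideal.mul_mem_mul hd hd'))) (hIIJ (Ideal.mul_mem_mul hc hb'))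
      · rw [hmul]
        have : (g : Matrix (Fin 2) (Fin 2) B) 0 0 * (h : Matrix (Fin 2) (Fin 2) B) 0 1 +
            (g : Matrix (Fin 2) (Fin 2) B) 0 1 * (h : Matrix (Fin 2) (Fin 2) B) 1 1 =
            (h : Matrix (Fin 2) (Fin 2) B) 0 1 +
            ((g : Matrix (Fin 2) (Fin 2) B) 0 0 - 1) * (h : Matrix (Fin 2) (Fin 2) B) 0 1 +
            ((g : Matrix (Fin 2) (Fin 2) B) 0 1 +
            (g : Matrix (Fin 2) (Fin 2) B) 0 1 * ((h : Matrix (Fin 2) (Fin 2) B) 1 1 - 1)) := by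
          ring
        rw [this]
        exact Ideal.add_mem _ (Ideal.add_mem _ hb' (hJII (Ideal.mul_mem_mul ha hb')))
          (Ideal.add_mem _ hb (hIJI (Ideal.mul_mem_mul hb hd')))
      · rw [hmul]
        have : (g : Matrix (Fin 2) (Fin 2) B) 1 0 * (h : Matrix (Fin 2) (Fin 2) B) 0 0 +
            (g : Matrix (Fin 2) (Fin 2) B) 1 1 * (h : Matrix (Fin 2) (Fin 2) B) 1 0 =
            ((g : Matrix (Fin 2) (Fin 2) B) 1 0 +
            (g : Matrix (Fin 2) (Fin 2) B) 1 0 * ((h : Matrix (Fin 2) (Fin 2) B) 0 0 - 1)) +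
            ((h : Matrix (Fin 2) (Fin 2) B) 1 0 +
            ((g : Matrix (Fin 2) (Fin 2) B) 1 1 - 1) * (h : Matrix (Fin 2) (Fin 2) B) 1 0) := by
          ring
        rw [this]
        exact Ideal.add_mem _ (Ideal.add_mem _ hc (hIJI (Ideal.mul_mem_mul hc ha')))
          (Ideal.add_mem _ hc' (hJII (Ideal.mul_mem_mul hd hc')))
    inv_mem' := by
      rintro g ⟨ha, hd, hb, hc⟩
      have hinv : ((g⁻¹ : SpecialLinearGroup (Fin 2) B) : Matrix (Fin 2) (Fin 2) B) =
          adjugate (g : Matrix (Fin 2) (Fin 2) B) :=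
        Matrix.SpecialLinearGroup.coe_inv g
      rw [Matrix.adjugate_fin_two] at hinv
      refine ⟨?_, ?_, ?_, ?_⟩ <;> rw [hinv] <;> simp
      exacts [hd, ha, hb, hc]
  }, rfl⟩
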